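/- Let O be an ELHI ontology, Q=(O,S,q) an OMQ with q a UCQ, A an S-ABox, and a a certain answer to Q on A. Then there exists a pseudo tree-shaped S-ABox A' with a tuple a' in its core such that: (1) the core of A' has size at most |q| and the outdegree of A' is at most |O|; (2) a' is a certain answer to Q on A'; and (3) there is a homomorphism h from A' to A with h(a')=a. -/

import Mathlib

/-- A role: a role name or an inverse role. -/
inductive Role (RN : Type) : Type
  | name (r : RN)
  | inv (r : RN)

/-- The role name underlying a role. -/
def Role.base {RN : Type} : Role RN → RN
  | .name r => r
  | .inv r => r

/-- A DL interpretation over concept names `CN` and role names `RN`. -/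
structure Interp (CN RN : Type) : Type 1 where
  Δ : Type
  cn : CN → Set Δ
  rn : RN → Set (Δ × Δ)

/-- Semantics of roles. -/
def Interp.role {CN RN : Type} (I : Interp CN RN) : Role RN → Set (I.Δ × I.Δ)
  | .name r => I.rn r
  | .inv r => { p | (p.2, p.1) ∈ I.rn r }

/-- ELI concepts: `⊤`, concept names, conjunction and existential restrictions
`∃r.C` over (possibly inverse) roles. -/
inductive Conc (CN RN : Type) : Type
  | top
  | name (A : CN)
  | conj (C D : Conc CN RN)
  | ex (r : Role RN) (C : Conc CN RN)

/-- Semantics of ELI concepts. -/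
def Conc.sem {CN RN : Type} (I : Interp CN RN) : Conc CN RN → Set I.Δ
  | .top => Set.univ
  | .name A => I.cn A
  | .conj C D => C.sem I ∩ D.sem I
  | .ex r C => { d | ∃ e, (d, e) ∈ I.role r ∧ e ∈ C.sem I }

/-- ELHI ontology axioms: concept inclusions `C ⊑ D` and role inclusions `r ⊑ s`. -/
inductive Ax (CN RN : Type) : Type
  | ci (C D : Conc CN RN)
  | ri (r s : Role RN)

/-- Satisfaction of an axiom in an interpretation. -/
def satAx {CN RN : Type} (I : Interp CN RN) : Ax CN RN → Prop
  | .ci C D => C.sem I ⊆ D.sem I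
  | .ri r s => ∀ p ∈ I.role r, p ∈ I.role s

/-- Concept names occurring in a concept. -/
def Conc.cnames {CN RN : Type} : Conc CN RN → Set CN
  | .top => ∅
  | .name A => {A}
  | .conj C D => C.cnames ∪ D.cnames
  | .ex _ C => C.cnames

/-- Role names occurring in a concept. -/
def Conc.rnames {CN RN : Type} : Conc CN RN → Set RN
  | .top => ∅
  | .name _ => ∅
  | .conj C D => C.rnames ∪ D.rnames
  | .ex r C => insert r.base C.rnames

/-- Concept names occurring in an axiom. -/
def Ax.cnames {CN RN : Type} : Ax CN RN → Set CN
  | .ci C D => C.cnames ∪ D.cnames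
  | .ri _ _ => ∅

/-- Size (number of symbols) of a concept. -/
def Conc.size {CN RN : Type} : Conc CN RN → ℕ
  | .top => 1
  | .name _ => 1
  | .conj C D => C.size + D.size + 1
  | .ex _ C => C.size + 2

/-- Size of an axiom. -/
def Ax.size {CN RN : Type} : Ax CN RN → ℕ
  | .ci C D => C.size + D.size + 1
  | .ri _ _ => 3

/-- Size of an ontology. -/
def ontoSize {CN RN : Type} (O : List (Ax CN RN)) : ℕ := (O.map Ax.size).sum

/-- An ABox over constants `C`: concept facts `A(c)` and role facts `r(c, c')`. -/
structure ABox (CN RN C : Type) : Type where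
  cf : Set (CN × C)
  rf : Set (RN × C × C)

/-- The active domain of an ABox. -/
def adom {CN RN C : Type} (A : ABox CN RN C) : Set C :=
  { c | (∃ B, (B, c) ∈ A.cf) ∨ ∃ r x y, (r, x, y) ∈ A.rf ∧ (c = x ∨ c = y) }

/-- `(I, ι)` is a model of the ABox `A` and the ontology `O`. -/
def IsModel {CN RN C : Type} (I : Interp CN RN) (ι : C → I.Δ)
    (A : ABox CN RN C) (O : List (Ax CN RN)) : Prop :=
  (∀ p ∈ A.cf, ι p.2 ∈ I.cn p.1) ∧
  (∀ t ∈ A.rf, (ι t.2.1, ι t.2.2) ∈ I.rn t.1) ∧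
  (∀ ax ∈ O, satAx I ax)

/-- A conjunctive query over a DL schema, with `n` answer variables and `nv`
variables altogether. -/
structure DLCQ (CN RN : Type) (n : ℕ) : Type where
  nv : ℕ
  ansVar : Fin n → Fin nv
  cat : List (CN × Fin nv)
  rat : List (RN × Fin nv × Fin nv)

/-- Size of a DL conjunctive query. -/
def DLCQ.size {CN RN : Type} {n : ℕ} (q : DLCQ CN RN n) : ℕ :=
  q.nv + q.cat.length + q.rat.length

/-- Size of a UCQ given as a list of CQ disjuncts. -/
def ucqSize {CN RN : Type} {n : ℕ} (L : List (DLCQ CN RN n)) : ℕ :=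
  (L.map DLCQ.size).sum

/-- `t` is an answer to the CQ `q` in the interpretation `I`. -/
def cqMatch {CN RN : Type} {n : ℕ} (q : DLCQ CN RN n) (I : Interp CN RN)
    (t : Fin n → I.Δ) : Prop :=
  ∃ h : Fin q.nv → I.Δ,
    (∀ p ∈ q.cat, h p.2 ∈ I.cn p.1) ∧
    (∀ p ∈ q.rat, (h p.2.1, h p.2.2) ∈ I.rn p.1) ∧
    ∀ i, h (q.ansVar i) = t i

/-- `t` is an answer to the CQ `q` on the ABox `A` (viewed as a database). -/
def cqMatchABox {CN RN C : Type} {n : ℕ} (q : DLCQ CN RN n) (A : ABox CN RN C)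
    (t : Fin n → C) : Prop :=
  ∃ h : Fin q.nv → C,
    (∀ p ∈ q.cat, (p.1, h p.2) ∈ A.cf) ∧
    (∀ p ∈ q.rat, (p.1, h p.2.1, h p.2.2) ∈ A.rf) ∧
    ∀ i, h (q.ansVar i) = t i

/-- `t` is a certain answer to the OMQ `(O, q)` (with `q` a UCQ) on the ABox `A`. -/
def certUCQ {CN RN C : Type} {n : ℕ} (O : List (Ax CN RN)) (q : List (DLCQ CN RN n))
    (A : ABox CN RN C) (t : Fin n → C) : Prop :=
  ∀ (J : Interp CN RN) (ι : C → J.Δ), IsModel J ι A O →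
    ∃ p ∈ q, cqMatch p J (ι ∘ t)

section Chase

open Classical

variable {CN RN K : Type}

/-- Elements of the canonical model: a constant plus an anonymous path. -/
abbrev DD (CN RN K : Type) : Type := K × List (Role RN × Conc CN RN)

/-- Appending an anonymous successor. -/
def dpush (d : DD CN RN K) (ρ : Role RN) (C : Conc CN RN) : DD CN RN K :=
  (d.1, d.2 ++ [(ρ, C)])

/-- Judgments of the chase calculus. -/
inductive Jg (CN RN K : Type) : Type where
  | hcn : DD CN RN K → CN → Jg CN RN K
  | ern : DD CN RN K → DD CN RN K → RN → Jg CN RN K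
  | chk : DD CN RN K → Conc CN RN → Jg CN RN K
  | sem : DD CN RN K → Conc CN RN → Jg CN RN K

/-- Height-indexed derivability in the chase calculus. -/
inductive DerH (O : List (Ax CN RN)) (B : ABox CN RN K) : ℕ → Jg CN RN K → Prop where
  | hcnBase {n A c} : (A, c) ∈ B.cf → DerH O B n (.hcn (c, []) A)
  | ernBase {n r x y} : (r, x, y) ∈ B.rf → DerH O B n (.ern (x, []) (y, []) r)
  | hcnDec {n d A} : DerH O B n (.sem d (.name A)) → DerH O B (n+1) (.hcn d A)
  | riNN {n r s d e} : Ax.ri (.name r) (.name s) ∈ O →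
      DerH O B n (.ern d e r) → DerH O B (n+1) (.ern d e s)
  | riNI {n r s d e} : Ax.ri (.name r) (.inv s) ∈ O →
      DerH O B n (.ern d e r) → DerH O B (n+1) (.ern e d s)
  | riIN {n r s d e} : Ax.ri (.inv r) (.name s) ∈ O →
      DerH O B n (.ern d e r) → DerH O B (n+1) (.ern e d s)
  | riII {n r s d e} : Ax.ri (.inv r) (.inv s) ∈ O →
      DerH O B n (.ern d e r) → DerH O B (n+1) (.ern d e s)
  | dexEN {n d r C} : DerH O B n (.sem d (.ex (.name r) C)) →
      DerH O B (n+1) (.ern d (dpush d (.name r) C) r)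
  | dexEI {n d r C} : DerH O B n (.sem d (.ex (.inv r) C)) →
      DerH O B (n+1) (.ern (dpush d (.inv r) C) d r)
  | chkTop {n d} : DerH O B n (.chk d .top)
  | chkName {n d A} : DerH O B n (.hcn d A) → DerH O B (n+1) (.chk d (.name A))
  | chkConj {n d C C'} : DerH O B n (.chk d C) → DerH O B n (.chk d C') →
      DerH O B (n+1) (.chk d (.conj C C'))
  | chkExN {n d e r C} : DerH O B n (.ern d e r) → DerH O B n (.chk e C) →
      DerH O B (n+1) (.chk d (.ex (.name r) C))
  | chkExI {n d e r C} : DerH O B n (.ern e d r) → DerH O B n (.chk e C) →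
      DerH O B (n+1) (.chk d (.ex (.inv r) C))
  | semAx {n d C C'} : Ax.ci C C' ∈ O → DerH O B n (.chk d C) → DerH O B (n+1) (.sem d C')
  | semConjL {n d C C'} : DerH O B n (.sem d (.conj C C')) → DerH O B (n+1) (.sem d C)
  | semConjR {n d C C'} : DerH O B n (.sem d (.conj C C')) → DerH O B (n+1) (.sem d C')
  | semDex {n d ρ C} : DerH O B n (.sem d (.ex ρ C)) → DerH O B (n+1) (.sem (dpush d ρ C) C)

/-- Derivability. -/
def Der (O : List (Ax CN RN)) (B : ABox CN RN K) (j : Jg CN RN K) : Prop := ∃ n, DerH O B n j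

theorem DerH.succ {O : List (Ax CN RN)} {B : ABox CN RN K} {n : ℕ} {j} (h : DerH O B n j) :
    DerH O B (n+1) j := by
  induction h with
  | hcnBase h => exact .hcnBase h
  | ernBase h => exact .ernBase h
  | hcnDec _ ih => exact .hcnDec ih
  | riNN hax _ ih => exact .riNN hax ih
  | riNI hax _ ih => exact .riNI hax ih
  | riIN hax _ ih => exact .riIN hax ih
  | riII hax _ ih => exact .riII hax ih
  | dexEN _ ih => exact .dexEN ih
  | dexEI _ ih => exact .dexEI ih
  | chkTop => exact .chkTop
  | chkName _ ih => exact .chkName ih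
  | chkConj _ _ ih1 ih2 => exact .chkConj ih1 ih2
  | chkExN _ _ ih1 ih2 => exact .chkExN ih1 ih2
  | chkExI _ _ ih1 ih2 => exact .chkExI ih1 ih2
  | semAx hax _ ih => exact .semAx hax ih
  | semConjL _ ih => exact .semConjL ih
  | semConjR _ ih => exact .semConjR ih
  | semDex _ ih => exact .semDex ih

theorem DerH.mono {O : List (Ax CN RN)} {B : ABox CN RN K} {n m : ℕ} {j} (h : DerH O B n j)
    (hnm : n ≤ m) : DerH O B m j := by
  obtain ⟨k, rfl⟩ := Nat.exists_eq_add_of_le hnm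
  clear hnm
  induction k with
  | zero => exact h
  | succ k ih => exact ih.succ

namespace Der

variable {O : List (Ax CN RN)} {B : ABox CN RN K}

theorem hcnBase {A c} (h : (A, c) ∈ B.cf) : Der O B (.hcn (c, []) A) := ⟨0, .hcnBase h⟩
theorem ernBase {r x y} (h : (r, x, y) ∈ B.rf) : Der O B (.ern (x, []) (y, []) r) :=
  ⟨0, .ernBase h⟩
theorem hcnDec {d A} (h : Der O B (.sem d (.name A))) : Der O B (.hcn d A) :=
  h.elim fun n hn => ⟨n+1, .hcnDec hn⟩
theorem riNN {r s d e} (hax : Ax.ri (.name r) (.name s) ∈ O) (h : Der O B (.ern d e r)) :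
    Der O B (.ern d e s) := h.elim fun n hn => ⟨n+1, .riNN hax hn⟩
theorem riNI {r s d e} (hax : Ax.ri (.name r) (.inv s) ∈ O) (h : Der O B (.ern d e r)) :
    Der O B (.ern e d s) := h.elim fun n hn => ⟨n+1, .riNI hax hn⟩
theorem riIN {r s d e} (hax : Ax.ri (.inv r) (.name s) ∈ O) (h : Der O B (.ern d e r)) :
    Der O B (.ern e d s) := h.elim fun n hn => ⟨n+1, .riIN hax hn⟩
theorem riII {r s d e} (hax : Ax.ri (.inv r) (.inv s) ∈ O) (h : Der O B (.ern d e r)) :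
    Der O B (.ern d e s) := h.elim fun n hn => ⟨n+1, .riII hax hn⟩
theorem dexEN {d r C} (h : Der O B (.sem d (.ex (.name r) C))) :
    Der O B (.ern d (dpush d (.name r) C) r) := h.elim fun n hn => ⟨n+1, .dexEN hn⟩
theorem dexEI {d r C} (h : Der O B (.sem d (.ex (.inv r) C))) :
    Der O B (.ern (dpush d (.inv r) C) d r) := h.elim fun n hn => ⟨n+1, .dexEI hn⟩
theorem chkTop {d} : Der O B (.chk d .top) := ⟨0, .chkTop⟩
theorem chkName {d A} (h : Der O B (.hcn d A)) : Der O B (.chk d (.name A)) :=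
  h.elim fun n hn => ⟨n+1, .chkName hn⟩
theorem chkConj {d C C'} (h : Der O B (.chk d C)) (h' : Der O B (.chk d C')) :
    Der O B (.chk d (.conj C C')) := by
  obtain ⟨n, hn⟩ := h; obtain ⟨n', hn'⟩ := h'
  exact ⟨max n n' + 1, .chkConj (hn.mono (Nat.le_max_left _ _)) (hn'.mono (Nat.le_max_right _ _))⟩
theorem chkExN {d e r C} (h : Der O B (.ern d e r)) (h' : Der O B (.chk e C)) :
    Der O B (.chk d (.ex (.name r) C)) := by
  obtain ⟨n, hn⟩ := h; obtain ⟨n', hn'⟩ := h'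
  exact ⟨max n n' + 1, .chkExN (hn.mono (Nat.le_max_left _ _)) (hn'.mono (Nat.le_max_right _ _))⟩
theorem chkExI {d e r C} (h : Der O B (.ern e d r)) (h' : Der O B (.chk e C)) :
    Der O B (.chk d (.ex (.inv r) C)) := by
  obtain ⟨n, hn⟩ := h; obtain ⟨n', hn'⟩ := h'
  exact ⟨max n n' + 1, .chkExI (hn.mono (Nat.le_max_left _ _)) (hn'.mono (Nat.le_max_right _ _))⟩
theorem semAx {d C C'} (hax : Ax.ci C C' ∈ O) (h : Der O B (.chk d C)) :
    Der O B (.sem d C') := h.elim fun n hn => ⟨n+1, .semAx hax hn⟩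
theorem semConjL {d C C'} (h : Der O B (.sem d (.conj C C'))) : Der O B (.sem d C) :=
  h.elim fun n hn => ⟨n+1, .semConjL hn⟩
theorem semConjR {d C C'} (h : Der O B (.sem d (.conj C C'))) : Der O B (.sem d C') :=
  h.elim fun n hn => ⟨n+1, .semConjR hn⟩
theorem semDex {d ρ C} (h : Der O B (.sem d (.ex ρ C))) : Der O B (.sem (dpush d ρ C) C) :=
  h.elim fun n hn => ⟨n+1, .semDex hn⟩

end Der

/-- The canonical model. -/
def canI (O : List (Ax CN RN)) (B : ABox CN RN K) : Interp CN RN where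
  Δ := DD CN RN K
  cn A := {d | Der O B (.hcn d A)}
  rn r := {p | Der O B (.ern p.1 p.2 r)}

def canι (O : List (Ax CN RN)) (B : ABox CN RN K) (c : K) : (canI O B).Δ := (c, [])

end Chase
section ChaseLemmas

open Classical

variable {CN RN K : Type} {O : List (Ax CN RN)} {B : ABox CN RN K}

theorem lemB {C : Conc CN RN} : ∀ {d : DD CN RN K}, Der O B (.sem d C) → d ∈ C.sem (canI O B) := by
  induction C with
  | top => intro d _; trivial
  | name A => intro d h; exact h.hcnDec
  | conj C C' ihC ihC' => intro d h; exact ⟨ihC h.semConjL, ihC' h.semConjR⟩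
  | ex ρ C ih =>
    intro d h
    refine ⟨dpush d ρ C, ?_, ih h.semDex⟩
    cases ρ with
    | name r => exact h.dexEN
    | inv r => exact h.dexEI

/-- chk-soundness motive. -/
def chkMot (O : List (Ax CN RN)) (B : ABox CN RN K) : Jg CN RN K → Prop
  | .chk d C => d ∈ C.sem (canI O B)
  | _ => True

theorem lemA1' {n : ℕ} {j : Jg CN RN K} (h : DerH O B n j) : chkMot O B j := by
  induction h with
  | chkTop => trivial
  | chkName h _ => exact ⟨_, h⟩
  | chkConj _ _ ih1 ih2 => exact ⟨ih1, ih2⟩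
  | chkExN he _ _ ih2 => exact ⟨_, ⟨_, he⟩, ih2⟩
  | chkExI he _ _ ih2 => exact ⟨_, ⟨_, he⟩, ih2⟩
  | _ => trivial

theorem lemA1 {d : DD CN RN K} {C : Conc CN RN} (h : Der O B (.chk d C)) :
    d ∈ C.sem (canI O B) := h.elim fun _ hn => lemA1' hn

theorem lemA2 {C : Conc CN RN} : ∀ {d : DD CN RN K}, d ∈ C.sem (canI O B) →
    Der O B (.chk d C) := by
  induction C with
  | top => intro d _; exact Der.chkTop
  | name A => intro d h; exact Der.chkName h
  | conj C C' ihC ihC' => intro d h; exact Der.chkConj (ihC h.1) (ihC' h.2)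
  | ex ρ C ih =>
    intro d h
    obtain ⟨e, hre, he⟩ := h
    cases ρ with
    | name r => exact Der.chkExN hre (ih he)
    | inv r => exact Der.chkExI hre (ih he)

theorem lemC : IsModel (canI O B) (canι O B) B O := by
  refine ⟨fun p hp => Der.hcnBase hp, fun t ht => Der.ernBase ht, fun ax hax => ?_⟩
  cases ax with
  | ci C C' => exact fun d hd => lemB (Der.semAx hax (lemA2 hd))
  | ri ρ σ =>
    intro p hp
    cases ρ with
    | name r =>
      cases σ with
      | name s => exact Der.riNN hax hp
      | inv s => exact Der.riNI hax hp
    | inv r =>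
      cases σ with
      | name s => exact Der.riIN hax hp
      | inv s => exact Der.riII hax hp

/-- Witness-picking step function into a model `J`. -/
noncomputable def wstep (J : Interp CN RN) (x : J.Δ) (e : Role RN × Conc CN RN) : J.Δ :=
  if h : ∃ y, (x, y) ∈ J.role e.1 ∧ y ∈ e.2.sem J then h.choose else x

theorem wstep_spec {J : Interp CN RN} {x : J.Δ} {ρ : Role RN} {C : Conc CN RN}
    (h : x ∈ (Conc.ex ρ C).sem J) :
    (x, wstep J x (ρ, C)) ∈ J.role ρ ∧ wstep J x (ρ, C) ∈ C.sem J := by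
  obtain ⟨y, hy⟩ := h
  rw [wstep, dif_pos ⟨y, hy⟩]
  exact (Exists.choose_spec (⟨y, hy⟩ : ∃ y, (x, y) ∈ J.role ρ ∧ y ∈ C.sem J))

/-- The canonical homomorphism into a model. -/
noncomputable def chom (J : Interp CN RN) (κ : K → J.Δ) (d : DD CN RN K) : J.Δ :=
  d.2.foldl (wstep J) (κ d.1)

theorem chom_push {J : Interp CN RN} {κ : K → J.Δ} (d : DD CN RN K) (ρ : Role RN)
    (C : Conc CN RN) : chom J κ (dpush d ρ C) = wstep J (chom J κ d) (ρ, C) := by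
  simp [chom, dpush]

theorem chom_nil {J : Interp CN RN} {κ : K → J.Δ} (c : K) : chom J κ ((c, []) : DD CN RN K) = κ c := rfl

/-- Canonicity motive. -/
def canMot (J : Interp CN RN) (g : DD CN RN K → J.Δ) : Jg CN RN K → Prop
  | .hcn d A => g d ∈ J.cn A
  | .ern d e r => (g d, g e) ∈ J.rn r
  | .chk d C => g d ∈ C.sem J
  | .sem d C => g d ∈ C.sem J

theorem lemD' {J : Interp CN RN} {κ : K → J.Δ} (hm : IsModel J κ B O) {n : ℕ} {j : Jg CN RN K}
    (h : DerH O B n j) : canMot J (chom J κ) j := by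
  induction h with
  | hcnBase h => exact hm.1 _ h
  | ernBase h => exact hm.2.1 _ h
  | hcnDec _ ih => exact ih
  | riNN hax _ ih => exact hm.2.2 _ hax _ ih
  | riNI hax _ ih => exact hm.2.2 _ hax _ ih
  | riIN hax _ ih => exact hm.2.2 _ hax _ ih
  | riII hax _ ih => exact hm.2.2 _ hax (_, _) ih
  | dexEN _ ih =>
    rw [canMot, chom_push]
    exact (wstep_spec ih).1
  | dexEI _ ih =>
    rw [canMot, chom_push]
    exact (wstep_spec ih).1
  | chkTop => trivial
  | chkName _ ih => exact ih
  | chkConj _ _ ih1 ih2 => exact ⟨ih1, ih2⟩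
  | chkExN _ _ ih1 ih2 => exact ⟨_, ih1, ih2⟩
  | chkExI _ _ ih1 ih2 => exact ⟨_, ih1, ih2⟩
  | semAx hax _ ih => exact hm.2.2 _ hax ih
  | semConjL _ ih => exact ih.1
  | semConjR _ ih => exact ih.2
  | semDex _ ih =>
    rw [canMot, chom_push]
    exact (wstep_spec ih).2

theorem lemD {J : Interp CN RN} {κ : K → J.Δ} (hm : IsModel J κ B O) {j : Jg CN RN K}
    (h : Der O B j) : canMot J (chom J κ) j := h.elim fun _ hn => lemD' hm hn

/-- Edge-shape motive. -/
def shapeMot : Jg CN RN K → Prop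
  | .ern d e _ => (d.2 = [] ∧ e.2 = []) ∨
      (d.1 = e.1 ∧ ((∃ x, e.2 = d.2 ++ [x]) ∨ (∃ x, d.2 = e.2 ++ [x])))
  | _ => True

theorem edge_shape' {n : ℕ} {j : Jg CN RN K} (h : DerH O B n j) : shapeMot j := by
  induction h with
  | ernBase h => exact Or.inl ⟨rfl, rfl⟩
  | riNN _ _ ih => exact ih
  | riNI _ _ ih =>
    rcases ih with ⟨h1, h2⟩ | ⟨h1, h2⟩
    · exact Or.inl ⟨h2, h1⟩
    · exact Or.inr ⟨h1.symm, h2.symm⟩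
  | riIN _ _ ih =>
    rcases ih with ⟨h1, h2⟩ | ⟨h1, h2⟩
    · exact Or.inl ⟨h2, h1⟩
    · exact Or.inr ⟨h1.symm, h2.symm⟩
  | riII _ _ ih => exact ih
  | dexEN _ _ => exact Or.inr ⟨rfl, Or.inl ⟨_, rfl⟩⟩
  | dexEI _ _ => exact Or.inr ⟨rfl, Or.inr ⟨_, rfl⟩⟩
  | _ => trivial

theorem edge_shape {d e : DD CN RN K} {r : RN} (h : Der O B (.ern d e r)) :
    (d.2 = [] ∧ e.2 = []) ∨
      (d.1 = e.1 ∧ ((∃ x, e.2 = d.2 ++ [x]) ∨ (∃ x, d.2 = e.2 ++ [x]))) :=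
  h.elim fun _ hn => edge_shape' hn

/-- An oriented role fact. -/
def ofact {α : Type} (r : RN) (b : Bool) (x y : α) : RN × α × α :=
  if b then (r, x, y) else (r, y, x)

theorem ofact_not {α : Type} (r : RN) (b : Bool) (x y : α) :
    ofact r (!b) x y = ofact r b y x := by cases b <;> rfl

/-- Core-edge motive: edges between two constants trace back to a single ABox fact,
and can be replayed over any ABox containing a copy of that fact. -/
def coreMot (O : List (Ax CN RN)) (B : ABox CN RN K) : Jg CN RN K → Prop
  | .ern d e r => d.2 = [] → e.2 = [] → ∃ r₀ b, ofact r₀ b d.1 e.1 ∈ B.rf ∧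
      ∀ {K' : Type} (B' : ABox CN RN K') (x y : K'), ofact r₀ b x y ∈ B'.rf →
        Der O B' (.ern (x, []) (y, []) r)
  | _ => True

theorem core_edge' {n : ℕ} {j : Jg CN RN K} (h : DerH O B n j) : coreMot O B j := by
  induction h with
  | ernBase h =>
    intro _ _
    exact ⟨_, true, h, fun B' x y hf => Der.ernBase hf⟩
  | riNN hax _ ih =>
    intro h1 h2
    obtain ⟨r₀, b, hf, hrep⟩ := ih h1 h2
    exact ⟨r₀, b, hf, fun B' x y h => Der.riNN hax (hrep B' x y h)⟩
  | riNI hax _ ih =>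
    intro h1 h2
    obtain ⟨r₀, b, hf, hrep⟩ := ih h2 h1
    refine ⟨r₀, !b, by rw [ofact_not]; exact hf, fun B' x y h => ?_⟩
    rw [ofact_not] at h
    exact Der.riNI hax (hrep B' y x h)
  | riIN hax _ ih =>
    intro h1 h2
    obtain ⟨r₀, b, hf, hrep⟩ := ih h2 h1
    refine ⟨r₀, !b, by rw [ofact_not]; exact hf, fun B' x y h => ?_⟩
    rw [ofact_not] at h
    exact Der.riIN hax (hrep B' y x h)
  | riII hax _ ih =>
    intro h1 h2
    obtain ⟨r₀, b, hf, hrep⟩ := ih h1 h2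
    exact ⟨r₀, b, hf, fun B' x y h => Der.riII hax (hrep B' x y h)⟩
  | dexEN _ _ =>
    intro _ h2
    simp [dpush] at h2
  | dexEI _ _ =>
    intro h1 _
    simp [dpush] at h1
  | _ => trivial

theorem core_edge {d e : DD CN RN K} {r : RN} (h : Der O B (.ern d e r)) (h1 : d.2 = [])
    (h2 : e.2 = []) : ∃ r₀ b, ofact r₀ b d.1 e.1 ∈ B.rf ∧
      ∀ {K' : Type} (B' : ABox CN RN K') (x y : K'), ofact r₀ b x y ∈ B'.rf →
        Der O B' (.ern (x, []) (y, []) r) :=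
  h.elim fun _ hn => core_edge' hn h1 h2

end ChaseLemmas
section Subconcepts

variable {CN RN : Type}

/-- Existential subconcepts (with role) of a concept. -/
def Conc.exsubs : Conc CN RN → List (Role RN × Conc CN RN)
  | .top => []
  | .name _ => []
  | .conj C D => C.exsubs ++ D.exsubs
  | .ex ρ C => (ρ, C) :: C.exsubs

/-- All subconcepts of a concept. -/
def Conc.subcs : Conc CN RN → List (Conc CN RN)
  | .top => [.top]
  | .name A => [.name A]
  | .conj C D => .conj C D :: (C.subcs ++ D.subcs)
  | .ex ρ C => .ex ρ C :: C.subcs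

theorem Conc.subcs_self (C : Conc CN RN) : C ∈ C.subcs := by
  cases C <;> simp [Conc.subcs]

theorem Conc.subcs_trans {L X Y : Conc CN RN} (h1 : X ∈ L.subcs) (h2 : Y ∈ X.subcs) :
    Y ∈ L.subcs := by
  induction L with
  | top => simp [Conc.subcs] at h1; subst h1; exact h2
  | name A => simp [Conc.subcs] at h1; subst h1; exact h2
  | conj C D ihC ihD =>
    rcases (by simpa [Conc.subcs] using h1 :
        X = Conc.conj C D ∨ X ∈ C.subcs ∨ X ∈ D.subcs) with rfl | h | h
    · exact h2
    · simp [Conc.subcs]; right; left; simpa using ihC h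
    · simp [Conc.subcs]; right; right; simpa using ihD h
  | ex ρ C ihC =>
    rcases (by simpa [Conc.subcs] using h1 : X = Conc.ex ρ C ∨ X ∈ C.subcs) with rfl | h
    · exact h2
    · simp [Conc.subcs]; right; exact ihC h

theorem Conc.exsubs_of_mem {L : Conc CN RN} {ρ : Role RN} {C : Conc CN RN}
    (h : Conc.ex ρ C ∈ L.subcs) : (ρ, C) ∈ L.exsubs := by
  induction L with
  | top => simp [Conc.subcs] at h
  | name A => simp [Conc.subcs] at h
  | conj C' D' ihC ihD =>
    rcases (by simpa [Conc.subcs] using h) with h | h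
    · simp [Conc.exsubs]; left; exact ihC h
    · simp [Conc.exsubs]; right; exact ihD h
  | ex ρ' C' ihC =>
    rcases (by simpa [Conc.subcs] using h) with ⟨rfl, rfl⟩ | h
    · simp [Conc.exsubs]
    · simp [Conc.exsubs]; right; exact ihC h

theorem Conc.exsubs_len (C : Conc CN RN) : C.exsubs.length ≤ C.size := by
  induction C with
  | top => simp [Conc.exsubs, Conc.size]
  | name A => simp [Conc.exsubs, Conc.size]
  | conj C D ihC ihD => simp [Conc.exsubs, Conc.size]; omega
  | ex ρ C ihC => simp [Conc.exsubs, Conc.size]; omega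

/-- Subconcepts of left-hand sides of concept inclusions of `O`. -/
def lhsSubs (O : List (Ax CN RN)) : List (Conc CN RN) :=
  O.flatMap fun ax => match ax with | .ci C _ => C.subcs | .ri _ _ => []

/-- Existential subconcepts of left-hand sides of concept inclusions of `O`. -/
def lhsEx (O : List (Ax CN RN)) : List (Role RN × Conc CN RN) :=
  O.flatMap fun ax => match ax with | .ci C _ => C.exsubs | .ri _ _ => []

theorem lhsSubs_trans {O : List (Ax CN RN)} {X Y : Conc CN RN} (h1 : X ∈ lhsSubs O)
    (h2 : Y ∈ X.subcs) : Y ∈ lhsSubs O := by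
  rw [lhsSubs, List.mem_flatMap] at h1 ⊢
  obtain ⟨ax, hax, hX⟩ := h1
  refine ⟨ax, hax, ?_⟩
  cases ax with
  | ci C D => exact Conc.subcs_trans hX h2
  | ri _ _ => simp at hX

theorem lhsSubs_of_ci {O : List (Ax CN RN)} {C D : Conc CN RN} (h : Ax.ci C D ∈ O) :
    C ∈ lhsSubs O := by
  rw [lhsSubs, List.mem_flatMap]
  exact ⟨_, h, Conc.subcs_self C⟩

theorem lhsEx_of_mem {O : List (Ax CN RN)} {ρ : Role RN} {C : Conc CN RN}
    (h : Conc.ex ρ C ∈ lhsSubs O) : (ρ, C) ∈ lhsEx O := by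
  rw [lhsSubs, List.mem_flatMap] at h
  obtain ⟨ax, hax, hX⟩ := h
  rw [lhsEx, List.mem_flatMap]
  refine ⟨ax, hax, ?_⟩
  cases ax with
  | ci C' D' => exact Conc.exsubs_of_mem hX
  | ri _ _ => simp at hX

theorem lhsEx_len (O : List (Ax CN RN)) : (lhsEx O).length ≤ ontoSize O := by
  rw [lhsEx, ontoSize, List.length_flatMap]
  apply List.sum_le_sum
  intro ax _
  cases ax with
  | ci C D =>
    calc C.exsubs.length ≤ C.size := Conc.exsubs_len C
    _ ≤ (Ax.ci C D).size := by simp [Ax.size]; omega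
  | ri _ _ => simp [Ax.size]

/-- Subconcept closure facts for conj / ex. -/
theorem lhsSubs_conj_left {O : List (Ax CN RN)} {C D : Conc CN RN}
    (h : Conc.conj C D ∈ lhsSubs O) : C ∈ lhsSubs O :=
  lhsSubs_trans h (by simp [Conc.subcs]; right; left; exact Conc.subcs_self C)

theorem lhsSubs_conj_right {O : List (Ax CN RN)} {C D : Conc CN RN}
    (h : Conc.conj C D ∈ lhsSubs O) : D ∈ lhsSubs O :=
  lhsSubs_trans h (by simp [Conc.subcs]; right; right; exact Conc.subcs_self D)

theorem lhsSubs_ex_body {O : List (Ax CN RN)} {ρ : Role RN} {C : Conc CN RN}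
    (h : Conc.ex ρ C ∈ lhsSubs O) : C ∈ lhsSubs O :=
  lhsSubs_trans h (by simp [Conc.subcs]; right; exact Conc.subcs_self C)

end Subconcepts
section Construction

open Classical

variable {CN RN K : Type}

/-- An edge in direction of a (possibly inverse) role. -/
def roleDer (O : List (Ax CN RN)) {K' : Type} (B' : ABox CN RN K') (ρ : Role RN)
    (x y : K') : Prop :=
  match ρ with
  | .name r => Der O B' (.ern (x, []) (y, []) r)
  | .inv r => Der O B' (.ern (y, []) (x, []) r)

/-- Least derivation height of a judgment. -/
noncomputable def rnk (O : List (Ax CN RN)) (B : ABox CN RN K) (j : Jg CN RN K) : ℕ :=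
  sInf {n | DerH O B n j}

theorem rnk_le {O : List (Ax CN RN)} {B : ABox CN RN K} {n : ℕ} {j : Jg CN RN K}
    (h : DerH O B n j) : rnk O B j ≤ n := Nat.sInf_le h

theorem derH_rnk {O : List (Ax CN RN)} {B : ABox CN RN K} {j : Jg CN RN K}
    (h : Der O B j) : DerH O B (rnk O B j) j := Nat.sInf_mem h

/-- Witness candidates for an existential subconcept at a constant. -/
def Wset (O : List (Ax CN RN)) (B : ABox CN RN K) (e : K) (ρ : Role RN)
    (C₁ : Conc CN RN) : Set (K × RN × Bool) :=
  {w | Der O B (.chk ((w.1, []) : DD CN RN K) C₁) ∧ ofact w.2.1 w.2.2 e w.1 ∈ B.rf ∧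
    ∀ {K' : Type} (B' : ABox CN RN K') (x y : K'), ofact w.2.1 w.2.2 x y ∈ B'.rf →
      roleDer O B' ρ x y}

theorem exists_min_rank {α : Type} (S : Set α) (f : α → ℕ) (h : S.Nonempty) :
    ∃ w ∈ S, ∀ w' ∈ S, f w ≤ f w' := by
  have himg : (f '' S).Nonempty := h.image f
  have hmem := Nat.sInf_mem himg
  obtain ⟨w, hw, hfw⟩ := hmem
  exact ⟨w, hw, fun w' hw' => hfw ▸ Nat.sInf_le ⟨w', hw', rfl⟩⟩

/-- Pick a rank-minimal witness. -/
noncomputable def pickW (O : List (Ax CN RN)) (B : ABox CN RN K) (e : K) (ρ : Role RN)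
    (C₁ : Conc CN RN) : Option (K × RN × Bool) :=
  if h : (Wset O B e ρ C₁).Nonempty then
    some (exists_min_rank _ (fun w => rnk O B (.chk ((w.1, []) : DD CN RN K) C₁)) h).choose
  else none

theorem pickW_of_nonempty {O : List (Ax CN RN)} {B : ABox CN RN K} {e : K} {ρ : Role RN}
    {C₁ : Conc CN RN} (h : (Wset O B e ρ C₁).Nonempty) :
    ∃ w, pickW O B e ρ C₁ = some w ∧ w ∈ Wset O B e ρ C₁ ∧
      ∀ w' ∈ Wset O B e ρ C₁,
        rnk O B (.chk ((w.1, []) : DD CN RN K) C₁) ≤ rnk O B (.chk ((w'.1, []) : DD CN RN K) C₁) := by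
  rw [pickW, dif_pos h]
  obtain ⟨hw, hmin⟩ := (exists_min_rank _ _ h).choose_spec
  exact ⟨_, rfl, hw, hmin⟩

theorem pickW_mem {O : List (Ax CN RN)} {B : ABox CN RN K} {e : K} {ρ : Role RN}
    {C₁ : Conc CN RN} {w : K × RN × Bool} (h : pickW O B e ρ C₁ = some w) :
    w ∈ Wset O B e ρ C₁ := by
  by_cases hne : (Wset O B e ρ C₁).Nonempty
  · obtain ⟨w', hw', hmem, _⟩ := pickW_of_nonempty hne
    rw [hw'] at h; cases h; exact hmem
  · rw [pickW, dif_neg hne] at h; cases h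

/-- The chosen witness for the `i`-th existential LHS subconcept. -/
noncomputable def witF (O : List (Ax CN RN)) (B : ABox CN RN K) (e : K)
    (i : Fin (ontoSize O)) : Option (K × RN × Bool) :=
  match (lhsEx O)[(i : ℕ)]? with
  | none => none
  | some (ρ, C₁) => pickW O B e ρ C₁

theorem witF_eq {O : List (Ax CN RN)} {B : ABox CN RN K} {e : K} {i : Fin (ontoSize O)}
    {ρ : Role RN} {C₁ : Conc CN RN} (h : (lhsEx O)[(i : ℕ)]? = some (ρ, C₁)) :
    witF O B e i = pickW O B e ρ C₁ := by
  rw [witF, h]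

/-- Endpoint of a tree path. -/
noncomputable def epA (O : List (Ax CN RN)) (B : ABox CN RN K) :
    K → List (Fin (ontoSize O)) → Option K
  | e, [] => some e
  | e, i :: rest =>
    match witF O B e i with
    | none => none
    | some w => epA O B w.1 rest

theorem epA_append {O : List (Ax CN RN)} {B : ABox CN RN K} (l : List (Fin (ontoSize O)))
    (i : Fin (ontoSize O)) : ∀ e, epA O B e (l ++ [i]) =
      (epA O B e l).bind (fun e' => (witF O B e' i).map Prod.fst) := by
  induction l with
  | nil =>
    intro e
    show epA O B e [i] = _
    rw [epA]
    cases h : witF O B e i with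
    | none => simp [h, epA]
    | some w => simp [h, epA]
  | cons j rest ih =>
    intro e
    show epA O B e (j :: (rest ++ [i])) = _
    rw [epA]
    cases h : witF O B e j with
    | none => simp [epA, h]
    | some w => simp only [epA, h]; exact ih w.1

variable (O : List (Ax CN RN)) (B : ABox CN RN K) (m : ℕ) (root : Fin m → K)

/-- Endpoint of a node of the pseudo-tree. -/
noncomputable def epOf (u : Fin m × List (Fin (ontoSize O))) : Option K :=
  epA O B (root u.1) u.2

/-- The pseudo tree-shaped ABox. -/
noncomputable def unrav : ABox CN RN (Fin m × List (Fin (ontoSize O))) where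
  cf := {p | ∃ e, epOf O B m root p.2 = some e ∧ (p.1, e) ∈ B.cf}
  rf := {t | (∃ s k k', t = (s, (k, []), (k', [])) ∧ (s, root k, root k') ∈ B.rf) ∨
    (∃ k l i e w, epA O B (root k) l = some e ∧ witF O B e i = some w ∧
      t = ofact w.2.1 w.2.2 (k, l) (k, l ++ [i]))}

/-- The transfer motive. -/
def bigMot : Jg CN RN K → Prop
  | .hcn d A => ∀ u, epOf O B m root u = some d.1 →
      Der O (unrav O B m root) (.hcn (u, d.2) A)
  | .ern d e r => d.1 = e.1 → ¬(d.2 = [] ∧ e.2 = []) → ∀ u, epOf O B m root u = some d.1 →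
      Der O (unrav O B m root) (.ern (u, d.2) (u, e.2) r)
  | .chk d C => C ∈ lhsSubs O → ∀ u, epOf O B m root u = some d.1 →
      Der O (unrav O B m root) (.chk (u, d.2) C)
  | .sem d C => ∀ u, epOf O B m root u = some d.1 →
      Der O (unrav O B m root) (.sem (u, d.2) C)

end Construction
section BigLemma

open Classical

variable {CN RN K : Type}

theorem bigLemma (O : List (Ax CN RN)) (B : ABox CN RN K) (m : ℕ) (root : Fin m → K) :
    ∀ (nn : ℕ) (j : Jg CN RN K), DerH O B nn j → bigMot O B m root j := by
  intro nn
  induction nn using Nat.strong_induction_on with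
  | _ nn IH =>
  intro j h
  cases h with
  | @hcnBase n A c hf =>
    intro u hu
    exact Der.hcnBase ⟨c, hu, hf⟩
  | @ernBase n r x y hf =>
    intro h1 h2 u hu
    exact absurd ⟨rfl, rfl⟩ h2
  | @hcnDec n d A h' =>
    intro u hu
    exact Der.hcnDec (IH n (Nat.lt_succ_self n) _ h' u hu)
  | @riNN n r s d e hax h' =>
    intro h1 h2 u hu
    exact Der.riNN hax (IH n (Nat.lt_succ_self n) _ h' h1 h2 u hu)
  | @riNI n r s d e hax h' =>
    intro h1 h2 u hu
    rw [h1] at hu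
    exact Der.riNI hax (IH n (Nat.lt_succ_self n) _ h' h1.symm
      (fun hh => h2 ⟨hh.2, hh.1⟩) u hu)
  | @riIN n r s d e hax h' =>
    intro h1 h2 u hu
    rw [h1] at hu
    exact Der.riIN hax (IH n (Nat.lt_succ_self n) _ h' h1.symm
      (fun hh => h2 ⟨hh.2, hh.1⟩) u hu)
  | @riII n r s d e hax h' =>
    intro h1 h2 u hu
    exact Der.riII hax (IH n (Nat.lt_succ_self n) _ h' h1 h2 u hu)
  | @dexEN n d r C h' =>
    intro h1 h2 u hu
    exact Der.dexEN (IH n (Nat.lt_succ_self n) _ h' u hu)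
  | @dexEI n d r C h' =>
    intro h1 h2 u hu
    exact Der.dexEI (IH n (Nat.lt_succ_self n) _ h' u hu)
  | @chkTop n d =>
    intro _ u _
    exact Der.chkTop
  | @chkName n d A h' =>
    intro hsub u hu
    exact Der.chkName (IH n (Nat.lt_succ_self n) _ h' u hu)
  | @chkConj n d C C' h1 h2 =>
    intro hsub u hu
    exact Der.chkConj (IH n (Nat.lt_succ_self n) _ h1 (lhsSubs_conj_left hsub) u hu)
      (IH n (Nat.lt_succ_self n) _ h2 (lhsSubs_conj_right hsub) u hu)
  | @chkExN n d e r C he hc =>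
    intro hsub u hu
    have hsubC : C ∈ lhsSubs O := lhsSubs_ex_body hsub
    rcases edge_shape ⟨n, he⟩ with ⟨hd2, he2⟩ | ⟨heq, hor⟩
    · -- both endpoints are constants: use a chosen tree child
      obtain ⟨d1, d2⟩ := d
      obtain ⟨e1, e2⟩ := e
      simp only at hd2 he2
      subst hd2; subst he2
      have hex : (Role.name r, C) ∈ lhsEx O := lhsEx_of_mem hsub
      obtain ⟨r₀, b, hf, hrep⟩ := core_edge ⟨n, he⟩ rfl rfl
      have hchk_e : Der O B (.chk ((e1, []) : DD CN RN K) C) := ⟨n, hc⟩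
      have hW : ((e1, r₀, b) : K × RN × Bool) ∈ Wset O B d1 (.name r) C :=
        ⟨hchk_e, hf, fun B' x y hxy => hrep B' x y hxy⟩
      obtain ⟨w, hpw, ⟨hwchk, hwf, hwrep⟩, hwmin⟩ := pickW_of_nonempty ⟨_, hW⟩
      obtain ⟨idx, hidx, hgetEl⟩ := List.getElem_of_mem hex
      set i : Fin (ontoSize O) := ⟨idx, lt_of_lt_of_le hidx (lhsEx_len O)⟩ with hidef
      have hget : (lhsEx O)[(i : ℕ)]? = some (Role.name r, C) := by
        show (lhsEx O)[idx]? = _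
        rw [List.getElem?_eq_getElem hidx, hgetEl]
      have hwit : witF O B d1 i = some w := by rw [witF_eq hget]; exact hpw
      have hepu' : epOf O B m root (u.1, u.2 ++ [i]) = some w.1 := by
        rw [epOf] at hu ⊢
        rw [epA_append, hu]
        simp [hwit]
      have hrnk : rnk O B (.chk ((w.1, []) : DD CN RN K) C) ≤ n :=
        le_trans (hwmin (e1, r₀, b) hW) (rnk_le hc)
      have hchild : Der O (unrav O B m root)
          (.chk (((u.1, u.2 ++ [i]), []) : DD CN RN (Fin m × List (Fin (ontoSize O)))) C) :=
        IH _ (lt_of_le_of_lt hrnk (Nat.lt_succ_self n)) _ (derH_rnk hwchk) hsubC _ hepu'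
      have hfact : ofact w.2.1 w.2.2 u (u.1, u.2 ++ [i]) ∈ (unrav O B m root).rf := by
        right
        exact ⟨u.1, u.2, i, d1, w, hu, hwit, rfl⟩
      have hedge := hwrep (unrav O B m root) u (u.1, u.2 ++ [i]) hfact
      exact Der.chkExN hedge hchild
    · -- same tree
      have hne : ¬(d.2 = [] ∧ e.2 = []) := by
        rcases hor with ⟨x, hx⟩ | ⟨x, hx⟩
        · rintro ⟨h1, h2⟩; rw [h1] at hx; rw [h2] at hx; simp at hx
        · rintro ⟨h1, h2⟩; rw [h1] at hx; rw [h2] at hx; simp at hx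
      have hedge := IH n (Nat.lt_succ_self n) _ he heq hne u hu
      have hchk := IH n (Nat.lt_succ_self n) _ hc hsubC u (by rw [← heq]; exact hu)
      exact Der.chkExN hedge hchk
  | @chkExI n d e r C he hc =>
    intro hsub u hu
    have hsubC : C ∈ lhsSubs O := lhsSubs_ex_body hsub
    rcases edge_shape ⟨n, he⟩ with ⟨he2, hd2⟩ | ⟨heq, hor⟩
    · obtain ⟨d1, d2⟩ := d
      obtain ⟨e1, e2⟩ := e
      simp only at hd2 he2
      subst hd2; subst he2
      have hex : (Role.inv r, C) ∈ lhsEx O := lhsEx_of_mem hsub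
      obtain ⟨r₀, b, hf, hrep⟩ := core_edge ⟨n, he⟩ rfl rfl
      have hchk_e : Der O B (.chk ((e1, []) : DD CN RN K) C) := ⟨n, hc⟩
      have hW : ((e1, r₀, !b) : K × RN × Bool) ∈ Wset O B d1 (.inv r) C := by
        refine ⟨hchk_e, by rw [ofact_not]; exact hf, fun B' x y hxy => ?_⟩
        rw [ofact_not] at hxy
        exact hrep B' y x hxy
      obtain ⟨w, hpw, ⟨hwchk, hwf, hwrep⟩, hwmin⟩ := pickW_of_nonempty ⟨_, hW⟩
      obtain ⟨idx, hidx, hgetEl⟩ := List.getElem_of_mem hex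
      set i : Fin (ontoSize O) := ⟨idx, lt_of_lt_of_le hidx (lhsEx_len O)⟩ with hidef
      have hget : (lhsEx O)[(i : ℕ)]? = some (Role.inv r, C) := by
        show (lhsEx O)[idx]? = _
        rw [List.getElem?_eq_getElem hidx, hgetEl]
      have hwit : witF O B d1 i = some w := by rw [witF_eq hget]; exact hpw
      have hepu' : epOf O B m root (u.1, u.2 ++ [i]) = some w.1 := by
        rw [epOf] at hu ⊢
        rw [epA_append, hu]
        simp [hwit]
      have hrnk : rnk O B (.chk ((w.1, []) : DD CN RN K) C) ≤ n :=
        le_trans (hwmin (e1, r₀, !b) hW) (rnk_le hc)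
      have hchild : Der O (unrav O B m root)
          (.chk (((u.1, u.2 ++ [i]), []) : DD CN RN (Fin m × List (Fin (ontoSize O)))) C) :=
        IH _ (lt_of_le_of_lt hrnk (Nat.lt_succ_self n)) _ (derH_rnk hwchk) hsubC _ hepu'
      have hfact : ofact w.2.1 w.2.2 u (u.1, u.2 ++ [i]) ∈ (unrav O B m root).rf := by
        right
        exact ⟨u.1, u.2, i, d1, w, hu, hwit, rfl⟩
      have hedge := hwrep (unrav O B m root) u (u.1, u.2 ++ [i]) hfact
      exact Der.chkExI hedge hchild
    · have hne : ¬(e.2 = [] ∧ d.2 = []) := by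
        rcases hor with ⟨x, hx⟩ | ⟨x, hx⟩
        · rintro ⟨h1, h2⟩; rw [h1] at hx; rw [h2] at hx; simp at hx
        · rintro ⟨h1, h2⟩; rw [h1] at hx; rw [h2] at hx; simp at hx
      have hedge := IH n (Nat.lt_succ_self n) _ he heq hne u (by rw [heq]; exact hu)
      have hchk := IH n (Nat.lt_succ_self n) _ hc hsubC u (by rw [heq]; exact hu)
      exact Der.chkExI hedge hchk
  | @semAx n d C C' hax h' =>
    intro u hu
    exact Der.semAx hax (IH n (Nat.lt_succ_self n) _ h' (lhsSubs_of_ci hax) u hu)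
  | @semConjL n d C C' h' =>
    intro u hu
    exact Der.semConjL (IH n (Nat.lt_succ_self n) _ h' u hu)
  | @semConjR n d C C' h' =>
    intro u hu
    exact Der.semConjR (IH n (Nat.lt_succ_self n) _ h' u hu)
  | @semDex n d ρ C h' =>
    intro u hu
    exact Der.semDex (IH n (Nat.lt_succ_self n) _ h' u hu)

end BigLemma
section Assembly

open Classical

variable {CN RN K : Type}

theorem witF_fact {O : List (Ax CN RN)} {B : ABox CN RN K} {e : K} {i : Fin (ontoSize O)}
    {w : K × RN × Bool} (h : witF O B e i = some w) :
    ofact w.2.1 w.2.2 e w.1 ∈ B.rf := by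
  rw [witF] at h
  cases hg : (lhsEx O)[(i : ℕ)]? with
  | none => rw [hg] at h; cases h
  | some rc =>
    obtain ⟨ρ, C₁⟩ := rc
    rw [hg] at h
    exact (pickW_mem h).2.1

theorem unrav_fact_child {O : List (Ax CN RN)} {B : ABox CN RN K} {m : ℕ} {root : Fin m → K}
    {r : RN} {k : Fin m} {l : List (Fin (ontoSize O))} {i : Fin (ontoSize O)}
    (h : (r, (k, l), (k, l ++ [i])) ∈ (unrav O B m root).rf) :
    ∃ e w1, epA O B (root k) l = some e ∧ witF O B e i = some (w1, r, true) := by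
  rcases h with ⟨s, k1, k2, ht, -⟩ | ⟨k2, l2, i2, e, w, hep, hwit, ht⟩
  · exfalso
    have := congrArg (fun t => t.2.2.2) ht
    simp at this
  · obtain ⟨w1, wr, b⟩ := w
    cases b with
    | false =>
      exfalso
      rw [ofact] at ht
      simp only [Bool.false_eq_true, if_false, Prod.ext_iff] at ht
      obtain ⟨-, ⟨-, hl1⟩, -, hl2⟩ := ht
      rw [← hl2] at hl1
      have := congrArg List.length hl1
      simp only [List.length_append, List.length_cons, List.length_nil] at this
      omega
    | true =>
      rw [ofact] at ht
      simp only [if_true, Prod.ext_iff] at ht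
      obtain ⟨hr, ⟨hk, hl⟩, -, hli⟩ := ht
      subst hr; subst hk; subst hl
      have hi : i = i2 := by simpa using List.append_cancel_left hli
      subst hi
      exact ⟨e, w1, hep, hwit⟩

theorem unrav_fact_parent {O : List (Ax CN RN)} {B : ABox CN RN K} {m : ℕ} {root : Fin m → K}
    {r : RN} {k : Fin m} {l : List (Fin (ontoSize O))} {i : Fin (ontoSize O)}
    (h : (r, (k, l ++ [i]), (k, l)) ∈ (unrav O B m root).rf) :
    ∃ e w1, epA O B (root k) l = some e ∧ witF O B e i = some (w1, r, false) := by
  rcases h with ⟨s, k1, k2, ht, -⟩ | ⟨k2, l2, i2, e, w, hep, hwit, ht⟩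
  · exfalso
    have := congrArg (fun t => t.2.1.2) ht
    simp at this
  · obtain ⟨w1, wr, b⟩ := w
    cases b with
    | true =>
      exfalso
      rw [ofact] at ht
      simp only [if_true, Prod.ext_iff] at ht
      obtain ⟨-, ⟨-, hl1⟩, -, hl2⟩ := ht
      rw [hl2] at hl1
      have := congrArg List.length hl1
      simp only [List.length_append, List.length_cons, List.length_nil] at this
      omega
    | false =>
      rw [ofact] at ht
      simp only [Bool.false_eq_true, if_false, Prod.ext_iff] at ht
      obtain ⟨hr, ⟨hk, hli⟩, -, hl⟩ := ht
      subst hr; subst hk; subst hl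
      have hi : i = i2 := by simpa using List.append_cancel_left hli
      subst hi
      exact ⟨e, w1, hep, hwit⟩

/-- Canonical representative of a core constant. -/
noncomputable def repF {m : ℕ} {K : Type} (root : Fin m → K) (v : Fin m) : Fin m :=
  (Finset.univ.filter fun k => root k = root v).min'
    ⟨v, Finset.mem_filter.2 ⟨Finset.mem_univ v, rfl⟩⟩

theorem repF_root {m : ℕ} {K : Type} (root : Fin m → K) (v : Fin m) :
    root (repF root v) = root v := by
  have h := Finset.min'_mem (Finset.univ.filter fun k => root k = root v)
    ⟨v, Finset.mem_filter.2 ⟨Finset.mem_univ v, rfl⟩⟩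
  rw [Finset.mem_filter] at h
  exact h.2

theorem repF_eq {m : ℕ} {K : Type} (root : Fin m → K) {v v' : Fin m}
    (h : root v = root v') : repF root v = repF root v' := by
  have hs : (Finset.univ.filter fun k => root k = root v) =
      (Finset.univ.filter fun k => root k = root v') := by
    ext k; simp [h]
  unfold repF
  congr 1

end Assembly

/-- Unraveling into pseudo tree-shaped ABoxes (Lemma 4 of the paper). Given an ELHI
ontology `O`, a UCQ `q`, an ABox `A` and a certain answer `a`, there is a pseudo
tree-shaped ABox `A'` with a tuple `a'` in its core such that (1) the core has at most
`|q|` constants and the outdegree of the trees is at most `|O|`, (2) `a'` is a certain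
answer on `A'`, and (3) `A'` maps homomorphically to `A` with `a' ↦ a`.

The pseudo tree-shaped ABox is encoded explicitly: its constants are pairs `(k, l)`
with `k` one of `m ≤ |q|` core constants and `l` a word over `Fin |O|` (a node of the
tree rooted at `k`; `l = []` is the core constant itself), the tree domains `T k` are
prefix-closed, role facts connect either two core constants or a parent and a child
in the same tree, every child is connected to its parent by exactly one role fact,
and there are no multi-edges inside the trees. -/
theorem unravel_into_pseudo_tree (CN RN C : Type) (O : List (Ax CN RN)) (n : ℕ)
    (q : List (DLCQ CN RN n)) (A : ABox CN RN C) (a : Fin n → C)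
    (hcert : certUCQ O q A a) :
    ∃ m : ℕ, m ≤ ucqSize q ∧
    ∃ (T : Fin m → Set (List (Fin (ontoSize O))))
      (A' : ABox CN RN (Fin m × List (Fin (ontoSize O))))
      (a' : Fin n → Fin m × List (Fin (ontoSize O))),
      -- tree domains are prefix-closed and contain the root
      (∀ k, [] ∈ T k ∧ ∀ (l : List (Fin (ontoSize O))) i, l ++ [i] ∈ T k → l ∈ T k) ∧
      -- all constants used in A' belong to the respective tree domain
      (∀ c ∈ adom A', c.2 ∈ T c.1) ∧
      -- role facts are core-core or parent-child within one tree
      (∀ (r : RN) x y, (r, x, y) ∈ A'.rf →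
        (x.2 = [] ∧ y.2 = []) ∨
        (x.1 = y.1 ∧ ((∃ i, y.2 = x.2 ++ [i]) ∨ ∃ i, x.2 = y.2 ++ [i]))) ∧
      -- each tree node is connected to its parent by a role fact
      (∀ k (l : List (Fin (ontoSize O))) i, l ++ [i] ∈ T k →
        ∃ r : RN, (r, (k, l), (k, l ++ [i])) ∈ A'.rf ∨ (r, (k, l ++ [i]), (k, l)) ∈ A'.rf) ∧
      -- no multi-edges within the trees (in either direction)
      (∀ k (l : List (Fin (ontoSize O))) i (r s : RN),
        (r, (k, l), (k, l ++ [i])) ∈ A'.rf → (s, (k, l), (k, l ++ [i])) ∈ A'.rf → r = s) ∧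
      (∀ k (l : List (Fin (ontoSize O))) i (r s : RN),
        (r, (k, l), (k, l ++ [i])) ∈ A'.rf → (s, (k, l ++ [i]), (k, l)) ∈ A'.rf → False) ∧
      (∀ k (l : List (Fin (ontoSize O))) i (r s : RN),
        (r, (k, l ++ [i]), (k, l)) ∈ A'.rf → (s, (k, l ++ [i]), (k, l)) ∈ A'.rf → r = s) ∧
      -- the tuple a' lies in the core
      (∀ i, (a' i).2 = []) ∧
      -- a' is a certain answer to the OMQ on A'
      certUCQ O q A' a' ∧
      -- A' maps homomorphically to A, with a' ↦ a
      ∃ h : Fin m × List (Fin (ontoSize O)) → C,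
        (∀ p ∈ A'.cf, (p.1, h p.2) ∈ A.cf) ∧
        (∀ t ∈ A'.rf, (t.1, h t.2.1, h t.2.2) ∈ A.rf) ∧
        ∀ i, h (a' i) = a i := by
  classical
  obtain ⟨p, hpq, π, hcat, hrat, hans⟩ := hcert (canI O A) (canι O A) lemC
  set root : Fin p.nv → C := fun k => (π k).1 with hroot
  have hbig : ∀ j, Der O A j → bigMot O A p.nv root j :=
    fun j hj => hj.elim fun nn h => bigLemma O A p.nv root nn j h
  have hep0 : ∀ v : Fin p.nv, epOf O A p.nv root (repF root v, []) = some ((π v).1) := by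
    intro v
    show epA O A (root (repF root v)) [] = some ((π v).1)
    rw [repF_root root v]
    show some (root v) = some ((π v).1)
    rfl
  have hcat' : ∀ pr ∈ p.cat, Der O (unrav O A p.nv root)
      (.hcn ((repF root pr.2, []), (π pr.2).2) pr.1) := by
    intro pr hpr
    exact hbig _ (hcat pr hpr) _ (hep0 pr.2)
  have hrat' : ∀ t ∈ p.rat, Der O (unrav O A p.nv root)
      (.ern ((repF root t.2.1, []), (π t.2.1).2) ((repF root t.2.2, []), (π t.2.2).2) t.1) := by
    intro t ht
    have hE : Der O A (.ern (π t.2.1) (π t.2.2) t.1) := hrat t ht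
    rcases edge_shape hE with ⟨h1, h2⟩ | ⟨heq, hor⟩
    · obtain ⟨r₀, b, hf, hrep⟩ := core_edge hE h1 h2
      have hcc : ofact r₀ b ((repF root t.2.1, []) : Fin p.nv × List (Fin (ontoSize O)))
          (repF root t.2.2, []) ∈ (unrav O A p.nv root).rf := by
        left
        cases b with
        | true =>
          refine ⟨r₀, repF root t.2.1, repF root t.2.2, rfl, ?_⟩
          rw [repF_root root t.2.1, repF_root root t.2.2]
          exact hf
        | false =>
          refine ⟨r₀, repF root t.2.2, repF root t.2.1, rfl, ?_⟩
          rw [repF_root root t.2.2, repF_root root t.2.1]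
          exact hf
      have hder := hrep (unrav O A p.nv root) _ _ hcc
      rw [h1, h2]
      exact hder
    · have hne : ¬((π t.2.1).2 = [] ∧ (π t.2.2).2 = []) := by
        rcases hor with ⟨x, hx⟩ | ⟨x, hx⟩
        · rintro ⟨u1, u2⟩; rw [u1] at hx; rw [u2] at hx; simp at hx
        · rintro ⟨u1, u2⟩; rw [u1] at hx; rw [u2] at hx; simp at hx
      have hrr : repF root t.2.1 = repF root t.2.2 := repF_eq root heq
      have hder := hbig _ hE heq hne (repF root t.2.1, []) (hep0 t.2.1)
      rw [← hrr]
      exact hder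
  have hsize : p.nv ≤ ucqSize q := by
    have h1 : p.nv ≤ DLCQ.size p := by rw [DLCQ.size]; omega
    have h2 : DLCQ.size p ≤ ucqSize q := by
      rw [ucqSize]
      exact List.single_le_sum (fun x _ => Nat.zero_le x) _ (List.mem_map_of_mem hpq)
    omega
  refine ⟨p.nv, hsize, fun k => {l | (epOf O A p.nv root (k, l)).isSome},
    unrav O A p.nv root, fun i => (repF root (p.ansVar i), []),
    ?_, ?_, ?_, ?_, ?_, ?_, ?_, ?_, ?_, ?_⟩
  · -- tree domains
    intro k
    constructor
    · show (epOf O A p.nv root (k, [])).isSome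
      rfl
    · intro l i hmem
      have hmem' : (epA O A (root k) (l ++ [i])).isSome := hmem
      rw [epA_append] at hmem'
      show (epA O A (root k) l).isSome
      cases hc : epA O A (root k) l with
      | none => rw [hc] at hmem'; simp at hmem'
      | some e => rfl
  · -- adom
    intro c hc
    rcases hc with ⟨B0, hB⟩ | ⟨r, x, y, hf, hxy⟩
    · obtain ⟨e, hep, -⟩ := hB
      show (epOf O A p.nv root (c.1, c.2)).isSome
      simp [hep]
    · rcases hf with ⟨s, k, k', ht, -⟩ | ⟨k, l, i, e, w, hep, hwit, ht⟩
      · have hx : x = (k, []) := congrArg (fun t => t.2.1) ht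
        have hy : y = (k', []) := congrArg (fun t => t.2.2) ht
        rcases hxy with rfl | rfl
        · rw [hx]; show (epOf O A p.nv root (k, [])).isSome; rfl
        · rw [hy]; show (epOf O A p.nv root (k', [])).isSome; rfl
      · have hsl : (epA O A (root k) l).isSome := by simp [hep]
        have hsli : (epA O A (root k) (l ++ [i])).isSome := by
          rw [epA_append, hep]; simp [hwit]
        have hx : x = (k, l) ∨ x = (k, l ++ [i]) := by
          cases hb : w.2.2 <;>
            rw [hb] at ht <;> rw [ofact] at ht <;> simp only [if_true, Bool.false_eq_true,
              if_false] at ht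
          · exact Or.inr (congrArg (fun t => t.2.1) ht)
          · exact Or.inl (congrArg (fun t => t.2.1) ht)
        have hy : y = (k, l) ∨ y = (k, l ++ [i]) := by
          cases hb : w.2.2 <;>
            rw [hb] at ht <;> rw [ofact] at ht <;> simp only [if_true, Bool.false_eq_true,
              if_false] at ht
          · exact Or.inl (congrArg (fun t => t.2.2) ht)
          · exact Or.inr (congrArg (fun t => t.2.2) ht)
        rcases hxy with rfl | rfl
        · rcases hx with rfl | rfl
          · exact hsl
          · exact hsli
        · rcases hy with rfl | rfl
          · exact hsl
          · exact hsli
  · -- shape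
    intro r x y h
    rcases h with ⟨s, k, k', ht, -⟩ | ⟨k, l, i, e, w, hep, hwit, ht⟩
    · left
      constructor
      · have := congrArg (fun t => t.2.1.2) ht; exact this
      · have := congrArg (fun t => t.2.2.2) ht; exact this
    · right
      cases hb : w.2.2 <;>
        rw [hb] at ht <;> rw [ofact] at ht <;> simp only [if_true, Bool.false_eq_true,
          if_false] at ht
      · have hx : x = (k, l ++ [i]) := congrArg (fun t => t.2.1) ht
        have hy : y = (k, l) := congrArg (fun t => t.2.2) ht
        subst hx; subst hy
        exact ⟨rfl, Or.inr ⟨i, rfl⟩⟩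
      · have hx : x = (k, l) := congrArg (fun t => t.2.1) ht
        have hy : y = (k, l ++ [i]) := congrArg (fun t => t.2.2) ht
        subst hx; subst hy
        exact ⟨rfl, Or.inl ⟨i, rfl⟩⟩
  · -- parent connection
    intro k l i hmem
    have hmem' : (epA O A (root k) (l ++ [i])).isSome := hmem
    rw [epA_append] at hmem'
    cases hc : epA O A (root k) l with
    | none => rw [hc] at hmem'; simp at hmem'
    | some e =>
      rw [hc, Option.bind_some] at hmem'
      cases hw : witF O A e i with
      | none => rw [hw] at hmem'; simp at hmem'
      | some w =>
        refine ⟨w.2.1, ?_⟩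
        have hfact : ofact w.2.1 w.2.2 ((k, l) : Fin p.nv × List (Fin (ontoSize O)))
            (k, l ++ [i]) ∈ (unrav O A p.nv root).rf := Or.inr ⟨k, l, i, e, w, hc, hw, rfl⟩
        cases hb : w.2.2 <;> rw [hb] at hfact <;>
          rw [ofact] at hfact <;> simp only [if_true, Bool.false_eq_true, if_false] at hfact
        · exact Or.inr hfact
        · exact Or.inl hfact
  · -- no multi-edge 1
    intro k l i r s h1 h2
    obtain ⟨e, w1, hep1, hw1⟩ := unrav_fact_child h1
    obtain ⟨e', w1', hep2, hw2⟩ := unrav_fact_child h2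
    rw [hep1] at hep2
    injection hep2 with he
    subst he
    rw [hw1] at hw2
    injection hw2 with hw
    exact (congrArg (fun t => t.2.1) hw)
  · -- no multi-edge 2
    intro k l i r s h1 h2
    obtain ⟨e, w1, hep1, hw1⟩ := unrav_fact_child h1
    obtain ⟨e', w1', hep2, hw2⟩ := unrav_fact_parent h2
    rw [hep1] at hep2
    injection hep2 with he
    subst he
    rw [hw1] at hw2
    injection hw2 with hw
    have := congrArg (fun t => t.2.2) hw
    simp at this
  · -- no multi-edge 3
    intro k l i r s h1 h2
    obtain ⟨e, w1, hep1, hw1⟩ := unrav_fact_parent h1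
    obtain ⟨e', w1', hep2, hw2⟩ := unrav_fact_parent h2
    rw [hep1] at hep2
    injection hep2 with he
    subst he
    rw [hw1] at hw2
    injection hw2 with hw
    exact (congrArg (fun t => t.2.1) hw)
  · -- a' in core
    intro i
    rfl
  · -- certain answer
    intro J κ hm
    refine ⟨p, hpq, fun v => chom J κ ((repF root v, []), (π v).2), ?_, ?_, ?_⟩
    · intro pr hpr
      exact lemD hm (hcat' pr hpr)
    · intro t ht
      exact lemD hm (hrat' t ht)
    · intro i
      have h3 : (π (p.ansVar i)).2 = ([] : List (Role RN × Conc CN RN)) := by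
        rw [hans i]
        rfl
      show chom J κ ((repF root (p.ansVar i), []), (π (p.ansVar i)).2) = _
      rw [h3]
      rfl
  · -- homomorphism
    refine ⟨fun u => (epOf O A p.nv root u).getD (root u.1), ?_, ?_, ?_⟩
    · intro pr hpr
      obtain ⟨e, hep, hBe⟩ := hpr
      simpa [hep] using hBe
    · intro t ht
      rcases ht with ⟨s, k, k', ht, hf⟩ | ⟨k, l, i, e, w, hep, hwit, ht⟩
      · subst ht
        simpa [epOf, epA] using hf
      · subst ht
        have hwf := witF_fact hwit
        have hepO : epOf O A p.nv root (k, l) = some e := hep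
        have hep' : epOf O A p.nv root (k, l ++ [i]) = some w.1 := by
          show epA O A (root k) (l ++ [i]) = some w.1
          rw [epA_append, hep]
          simp [hwit]
        cases hb : w.2.2
        · rw [hb] at hwf
          rw [ofact] at hwf ⊢
          simp only [Bool.false_eq_true, if_false] at hwf ⊢
          simpa [hepO, hep'] using hwf
        · rw [hb] at hwf
          rw [ofact] at hwf ⊢
          simp only [if_true] at hwf ⊢
          simpa [hepO, hep'] using hwf
    · intro i
      show (epOf O A p.nv root (repF root (p.ansVar i), [])).getD _ = a i
      rw [hep0 (p.ansVar i)]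
      simp only [Option.getD_some]
      rw [hans i]
      rfl
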